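/- Let C̃ ⊆ ℝ^n be a (convex polyhedral) cone, let C be a proper face of C̃, and let S(C) denote the linear span of C. For each facet σ of C̃, choose a half-space H̃_σ = {x ∈ ℝ^n : u_σ·x ≤ 0} such that C̃ ⊆ H̃_σ and {x : u_σ·x = 0} ∩ C̃ = σ. Then C = (⋂_{σ a facet of C̃ with C ⊄ σ} H̃_σ) ∩ S(C), where the intersection is taken only over facets σ of C̃ that do not contain C. -/

import Mathlib

open scoped RealInnerProductSpace

/-- A (convex polyhedral) cone in `ℝ^n`: nonnegative combinations of finitely many vectors. -/
def IsPolyhedralCone {n : ℕ} (C : Set (EuclideanSpace ℝ (Fin n))) : Prop :=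
  ∃ (k : ℕ) (v : Fin k → EuclideanSpace ℝ (Fin n)),
    C = {x | ∃ lam : Fin k → ℝ, (∀ i, 0 ≤ lam i) ∧ x = ∑ i, lam i • v i}

/-- `F` is a face of the cone `C`. -/
def IsFaceOf {n : ℕ} (F C : Set (EuclideanSpace ℝ (Fin n))) : Prop :=
  F = C ∨ ∃ u : EuclideanSpace ℝ (Fin n),
    (∀ x ∈ C, ⟪u, x⟫ ≤ 0) ∧ F = C ∩ {x | ⟪u, x⟫ = 0}

/-- The dimension of a cone: the dimension of its linear span. -/
noncomputable def coneDim {n : ℕ} (C : Set (EuclideanSpace ℝ (Fin n))) : ℕ :=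
  Module.finrank ℝ (Submodule.span ℝ C)

/-- A facet of `C` is a face of dimension `dim C - 1`. -/
def IsFacetOf {n : ℕ} (σ C : Set (EuclideanSpace ℝ (Fin n))) : Prop :=
  IsFaceOf σ C ∧ coneDim σ + 1 = coneDim C

/-- The polar of a cone. -/
def polarCone {n : ℕ} (C : Set (EuclideanSpace ℝ (Fin n))) :
    Set (EuclideanSpace ℝ (Fin n)) :=
  {u | ∀ x ∈ C, ⟪u, x⟫ ≤ 0}

/-- A complete polyhedral fan in `ℝ^n`. -/
def IsCompleteFan {n : ℕ} (𝓕 : Set (Set (EuclideanSpace ℝ (Fin n)))) : Prop :=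
  𝓕.Finite ∧ (∀ C ∈ 𝓕, IsPolyhedralCone C) ∧
    (∀ C ∈ 𝓕, ∀ F, IsFaceOf F C → F ∈ 𝓕) ∧
    (∀ C ∈ 𝓕, ∀ C' ∈ 𝓕, IsFaceOf (C ∩ C') C ∧ IsFaceOf (C ∩ C') C') ∧
    ⋃₀ 𝓕 = Set.univ

/-- Right-hand side of the toric differential inclusion given by `𝓕` and `δ`. -/
noncomputable def toricRHS {n : ℕ} (𝓕 : Set (Set (EuclideanSpace ℝ (Fin n))))
    (δ : ℝ) (X : EuclideanSpace ℝ (Fin n)) : Set (EuclideanSpace ℝ (Fin n)) :=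
  polarCone (⋂₀ {C | C ∈ 𝓕 ∧ Metric.infDist X C ≤ δ})

/-- The quasi-toric differential inclusion given by `𝓕` and `d` is well-defined. -/
def QTDIWellDefined {n : ℕ} (𝓕 : Set (Set (EuclideanSpace ℝ (Fin n))))
    (d : Fin n → ℝ) : Prop :=
  ∀ C ∈ 𝓕, ∀ C' ∈ 𝓕, ∀ X : EuclideanSpace ℝ (Fin n),
    ∀ (hk : coneDim C < n) (hm : coneDim C' < n),
      Metric.infDist X C ≤ d ⟨coneDim C, hk⟩ →
      Metric.infDist X C' ≤ d ⟨coneDim C', hm⟩ →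
      ∃ hh : coneDim (C ∩ C') < n,
        Metric.infDist X (C ∩ C') ≤ d ⟨coneDim (C ∩ C'), hh⟩



section FaceAux

open Module Submodule

/-- conic combinations of `v`. -/
def coneOf' {n k : ℕ} (v : Fin k → EuclideanSpace ℝ (Fin n)) : Set (EuclideanSpace ℝ (Fin n)) :=
  {x | ∃ lam : Fin k → ℝ, (∀ i, 0 ≤ lam i) ∧ x = ∑ i, lam i • v i}

theorem coneCarath' {n k : ℕ} (v : Fin k → EuclideanSpace ℝ (Fin n)) (N : ℕ) :
    ∀ (lam : Fin k → ℝ), (∀ i, 0 ≤ lam i) →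
      (Finset.filter (fun i => lam i ≠ 0) Finset.univ).card ≤ N →
      ∃ (s : Finset (Fin k)) (mu : Fin k → ℝ),
        LinearIndependent ℝ (fun i : s => v i) ∧ (∀ i, 0 ≤ mu i) ∧
        (∀ i ∉ s, mu i = 0) ∧ ∑ i, mu i • v i = ∑ i, lam i • v i := by
  induction N with
  | zero =>
      intro lam h0 hcard
      have hlam : ∀ i, lam i = 0 := by
        intro i; by_contra h
        have hi : i ∈ Finset.filter (fun i => lam i ≠ 0) Finset.univ := by simp [h]
        have := Finset.card_pos.mpr ⟨i, hi⟩; omega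
      refine ⟨∅, 0, linearIndependent_empty_type, fun i => le_refl _, fun i _ => rfl, by simp [hlam]⟩
  | succ N ih =>
      intro lam h0 hcard
      set s := Finset.filter (fun i => lam i ≠ 0) Finset.univ with hs
      by_cases hind : LinearIndependent ℝ (fun i : s => v i)
      · exact ⟨s, lam, hind, h0, fun i hi => by simpa [hs] using hi, rfl⟩
      · obtain ⟨g, hgsum, j, hgj⟩ := Fintype.not_linearIndependent_iff.mp hind
        -- extend g to all of Fin k
        have key : ∀ c : Fin k → ℝ, (∀ i ∉ s, c i = 0) → (∑ i, c i • v i = 0) →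
            (∃ i, 0 < c i) →
            ∃ (t : Finset (Fin k)) (mu : Fin k → ℝ),
              LinearIndependent ℝ (fun i : t => v i) ∧ (∀ i, 0 ≤ mu i) ∧
              (∀ i ∉ t, mu i = 0) ∧ ∑ i, mu i • v i = ∑ i, lam i • v i := by
          intro c hc0 hcsum hcpos
          set S : Finset (Fin k) := Finset.filter (fun i => 0 < c i) Finset.univ with hS
          have hSne : S.Nonempty := by
            obtain ⟨i, hi⟩ := hcpos; exact ⟨i, by simp [hS, hi]⟩
          set t0 : ℝ := S.inf' hSne (fun i => lam i / c i) with ht0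
          have ht0nn : 0 ≤ t0 := by
            apply Finset.le_inf'
            intro b hb
            have : 0 < c b := by simpa [hS] using hb
            exact div_nonneg (h0 b) this.le
          obtain ⟨i0, hi0S, hi0⟩ := S.exists_mem_eq_inf' hSne (fun i => lam i / c i)
          have hci0 : 0 < c i0 := by simpa [hS] using hi0S
          set lam' : Fin k → ℝ := fun i => lam i - t0 * c i with hlam'
          have hlam'nn : ∀ i, 0 ≤ lam' i := by
            intro i
            by_cases h : 0 < c i
            · have : t0 ≤ lam i / c i := Finset.inf'_le _ (by simp [hS, h])
              have := (le_div_iff₀ h).mp this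
              simp only [hlam']; linarith
            · push_neg at h
              have : t0 * c i ≤ 0 := mul_nonpos_of_nonneg_of_nonpos ht0nn h
              have := h0 i; simp only [hlam']; linarith
          have hlam'i0 : lam' i0 = 0 := by
            simp only [hlam', hi0, ht0]
            field_simp
            ring
          have hsub : Finset.filter (fun i => lam' i ≠ 0) Finset.univ ⊆ s.erase i0 := by
            intro i hi
            simp only [Finset.mem_filter] at hi
            rcases hi with ⟨-, hi⟩
            refine Finset.mem_erase.mpr ⟨?_, ?_⟩
            · rintro rfl; exact hi hlam'i0
            · by_contra hmem
              have hlami : lam i = 0 := by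
                by_contra h; exact hmem (by simp [hs, h])
              exact hi (by simp [hlam', hlami, hc0 i hmem])
          have hi0s : i0 ∈ s := by
            by_contra h; exact absurd (hc0 i0 h) (ne_of_gt hci0)
          have hcard' : (Finset.filter (fun i => lam' i ≠ 0) Finset.univ).card ≤ N := by
            have h1 := Finset.card_le_card hsub
            have h2 : (s.erase i0).card = s.card - 1 := Finset.card_erase_of_mem hi0s
            have h3 : 1 ≤ s.card := Finset.card_pos.mpr ⟨i0, hi0s⟩
            omega
          have hsum' : ∑ i, lam' i • v i = ∑ i, lam i • v i := by
            simp only [hlam', sub_smul, Finset.sum_sub_distrib, mul_smul]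
            rw [← Finset.smul_sum, hcsum, smul_zero, sub_zero]
          obtain ⟨t, mu, h1, h2, h3, h4⟩ := ih lam' hlam'nn hcard'
          exact ⟨t, mu, h1, h2, h3, h4.trans hsum'⟩
        -- build the extension
        set c : Fin k → ℝ := fun i => if h : i ∈ s then g ⟨i, h⟩ else 0 with hc
        have hc0 : ∀ i ∉ s, c i = 0 := fun i hi => by simp [hc, hi]
        have hcsum : ∑ i, c i • v i = 0 := by
          rw [← Finset.sum_subset (Finset.subset_univ s)
            (fun i _ hi => by rw [hc0 i hi, zero_smul])]
          rw [← Finset.sum_attach s (fun i => c i • v i)]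
          simpa [hc] using hgsum
        have hcj : c (j : Fin k) ≠ 0 := by
          simp only [hc, dif_pos j.2]
          simpa using hgj
        rcases lt_or_gt_of_ne hcj with hneg | hpos
        · refine key (fun i => -c i) (fun i hi => show -c i = 0 by rw [hc0 i hi, neg_zero]) ?_
            ⟨j, show (0:ℝ) < -c j from neg_pos.mpr hneg⟩
          show ∑ i, (-c i) • v i = 0
          simp only [neg_smul, Finset.sum_neg_distrib, hcsum, neg_zero]
        · exact key c hc0 hcsum ⟨j, hpos⟩

theorem isClosed_coneOf {n k : ℕ} (v : Fin k → EuclideanSpace ℝ (Fin n)) :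
    IsClosed (coneOf' v) := by
  classical
  have hset : coneOf' v = ⋃ s ∈ {s : Finset (Fin k) | LinearIndependent ℝ (fun i : s => v i)},
      (fun lam : s → ℝ => ∑ i : s, lam i • v (i : Fin k)) '' {lam | ∀ i, 0 ≤ lam i} := by
    ext x
    constructor
    · rintro ⟨lam, h0, rfl⟩
      obtain ⟨s, mu, hind, hmu0, hmuz, hsum⟩ := coneCarath' v _ lam h0 le_rfl
      refine Set.mem_biUnion hind ⟨fun i => mu i, fun i => hmu0 i, ?_⟩
      show ∑ i : s, mu i • v (i : Fin k) = _
      rw [← hsum, Finset.sum_coe_sort s (fun i => mu i • v i)]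
      exact (Finset.sum_subset (Finset.subset_univ s)
        (fun i _ hi => by rw [hmuz i hi, zero_smul]))
    · intro hx
      simp only [Set.mem_iUnion] at hx
      obtain ⟨s, hs, lam, h0, rfl⟩ := hx
      refine ⟨fun i => if h : i ∈ s then lam ⟨i, h⟩ else 0, fun i => ?_, ?_⟩
      · by_cases h : i ∈ s
        · simpa [h] using h0 ⟨i, h⟩
        · simp [h]
      · show _ = ∑ i : Fin k, (if h : i ∈ s then lam ⟨i, h⟩ else 0) • v i
        rw [← Finset.sum_subset (Finset.subset_univ s)
          (fun i _ hi => by rw [dif_neg hi, zero_smul])]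
        rw [← Finset.sum_coe_sort s
          (fun i => (if h : (i:Fin k) ∈ s then lam ⟨i, h⟩ else 0) • v (i:Fin k))]
        apply Finset.sum_congr rfl
        intro i _
        rw [dif_pos i.2]
  rw [hset]
  apply Set.Finite.isClosed_biUnion (Set.toFinite _)
  intro s hs
  -- the linear map given by s
  let T : (s → ℝ) →ₗ[ℝ] EuclideanSpace ℝ (Fin n) :=
    { toFun := fun lam => ∑ i : s, lam i • v (i : Fin k)
      map_add' := fun a b => by simp [add_smul, Finset.sum_add_distrib]
      map_smul' := fun r a => by simp [smul_smul, Finset.smul_sum]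
    }
  have hinj : Function.Injective T := by
    rw [← LinearMap.ker_eq_bot, LinearMap.ker_eq_bot']
    intro a ha
    have := Fintype.linearIndependent_iff.mp hs a ha
    funext i; exact this i
  have hemb := LinearMap.isClosedEmbedding_of_injective
    (by rwa [LinearMap.ker_eq_bot] : LinearMap.ker T = ⊥)
  have hclosed : IsClosed {lam : s → ℝ | ∀ i, 0 ≤ lam i} := by
    have : {lam : s → ℝ | ∀ i, 0 ≤ lam i} = ⋂ i : s, {lam : s → ℝ | 0 ≤ lam i} := by
      ext lam; simp [Set.mem_iInter]
    rw [this]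
    exact isClosed_iInter fun i => isClosed_le continuous_const (continuous_apply i)
  exact hemb.isClosedMap _ hclosed

variable {n k : ℕ} (v : Fin k → EuclideanSpace ℝ (Fin n))

theorem gen_mem_coneOf (i : Fin k) : v i ∈ coneOf' v := by
  refine ⟨fun j => if j = i then 1 else 0, fun j => by positivity, ?_⟩
  simp [ite_smul]

theorem zero_mem_coneOf : (0 : EuclideanSpace ℝ (Fin n)) ∈ coneOf' v :=
  ⟨0, fun i => le_refl _, by simp⟩

theorem smul_mem_coneOf {t : ℝ} (ht : 0 ≤ t) {x} (hx : x ∈ coneOf' v) : t • x ∈ coneOf' v := by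
  obtain ⟨lam, h0, rfl⟩ := hx
  exact ⟨fun i => t * lam i, fun i => mul_nonneg ht (h0 i),
    by simp [Finset.smul_sum, mul_smul]⟩

theorem convex_coneOf : Convex ℝ (coneOf' v) := by
  rintro x ⟨la, la0, rfl⟩ y ⟨mu, mu0, rfl⟩ a b ha hb _
  exact ⟨fun i => a * la i + b * mu i,
    fun i => add_nonneg (mul_nonneg ha (la0 i)) (mul_nonneg hb (mu0 i)),
    by simp [add_smul, mul_smul, Finset.sum_add_distrib, Finset.smul_sum]⟩

theorem coneOf_subset_span : coneOf' v ⊆ (span ℝ (Set.range v) : Set _) := by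
  rintro x ⟨lam, h0, rfl⟩
  exact sum_mem fun i _ => smul_mem _ _ (subset_span (Set.mem_range_self i))

theorem span_coneOf : span ℝ (coneOf' v) = span ℝ (Set.range v) := by
  apply le_antisymm
  · exact span_le.mpr (coneOf_subset_span v)
  · apply span_le.mpr
    rintro x ⟨i, rfl⟩
    exact subset_span (gen_mem_coneOf v i)

theorem inner_nonpos_of_coneOf {u0 : EuclideanSpace ℝ (Fin n)}
    (hu : ∀ i, ⟪u0, v i⟫ ≤ 0) {x} (hx : x ∈ coneOf' v) : ⟪u0, x⟫ ≤ 0 := by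
  obtain ⟨lam, h0, rfl⟩ := hx
  rw [inner_sum]
  apply Finset.sum_nonpos
  intro i _
  rw [real_inner_smul_right]
  exact mul_nonpos_of_nonneg_of_nonpos (h0 i) (hu i)

/-- if a conic combination is killed by a functional nonpositive on generators,
each contributing generator is killed. -/
theorem coneOf_ker_rep {u0 : EuclideanSpace ℝ (Fin n)}
    (hu : ∀ i, ⟪u0, v i⟫ ≤ 0) {lam : Fin k → ℝ} (h0 : ∀ i, 0 ≤ lam i)
    (hker : ⟪u0, ∑ i, lam i • v i⟫ = 0) :
    ∀ i, lam i * ⟪u0, v i⟫ = 0 := by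
  have hsum : ∑ i, lam i * ⟪u0, v i⟫ = 0 := by
    rw [← hker, inner_sum]
    exact Finset.sum_congr rfl fun i _ => (real_inner_smul_right _ _ _).symm
  have := (Finset.sum_eq_zero_iff_of_nonpos (fun i _ =>
    mul_nonpos_of_nonneg_of_nonpos (h0 i) (hu i))).mp hsum
  exact fun i => this i (Finset.mem_univ i)

theorem coneOf_ker_sub_span {u0 : EuclideanSpace ℝ (Fin n)}
    (hu : ∀ i, ⟪u0, v i⟫ ≤ 0) {x} (hx : x ∈ coneOf' v) (hker : ⟪u0, x⟫ = 0) :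
    x ∈ span ℝ (v '' {i | ⟪u0, v i⟫ = 0}) := by
  obtain ⟨lam, h0, rfl⟩ := hx
  have hterm := coneOf_ker_rep v hu h0 hker
  apply sum_mem
  intro i _
  by_cases hvi : ⟪u0, v i⟫ = 0
  · exact smul_mem _ _ (subset_span ⟨i, hvi, rfl⟩)
  · have : lam i = 0 := by
      rcases mul_eq_zero.mp (hterm i) with h | h
      · exact h
      · exact absurd h hvi
    rw [this, zero_smul]; exact zero_mem _

/-- separation of a point from a closed cone. -/
theorem coneOf_sep {x : EuclideanSpace ℝ (Fin n)} (hcl : IsClosed (coneOf' v))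
    (hx : x ∉ coneOf' v) :
    ∃ w : EuclideanSpace ℝ (Fin n), (∀ y ∈ coneOf' v, ⟪w, y⟫ ≤ 0) ∧ 0 < ⟪w, x⟫ := by
  obtain ⟨f, c, hfc, hcx⟩ := geometric_hahn_banach_closed_point (convex_coneOf v) hcl hx
  have hc0 : 0 < c := by
    have := hfc 0 (zero_mem_coneOf v)
    simpa using this
  have hfy : ∀ y ∈ coneOf' v, f y ≤ 0 := by
    intro y hy
    by_contra h
    push_neg at h
    have ht : (0:ℝ) ≤ c / f y := div_nonneg hc0.le h.le
    have := hfc _ (smul_mem_coneOf v ht hy)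
    rw [map_smul, smul_eq_mul, div_mul_cancel₀ _ (ne_of_gt h)] at this
    exact lt_irrefl c this
  refine ⟨(InnerProductSpace.toDual ℝ _).symm f, ?_, ?_⟩
  · intro y hy
    rw [InnerProductSpace.toDual_symm_apply]
    exact hfy y hy
  · rw [InnerProductSpace.toDual_symm_apply]
    exact hc0.trans hcx

theorem inner_eq_zero_of_mem_span {a : EuclideanSpace ℝ (Fin n)}
    {s : Set (EuclideanSpace ℝ (Fin n))} (h : ∀ y ∈ s, ⟪a, y⟫ = 0) :
    ∀ x ∈ span ℝ s, ⟪a, x⟫ = 0 := by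
  intro x hx
  induction hx using Submodule.span_induction with
  | mem y hy => exact h y hy
  | zero => simp
  | add x y _ _ hx hy => rw [inner_add_right, hx, hy, add_zero]
  | smul t x _ hx => rw [real_inner_smul_right, hx, mul_zero]

/-- Key rotation lemma: any proper supported face of a polyhedral cone is contained in a facet. -/
theorem exists_facet_above (v : Fin k → EuclideanSpace ℝ (Fin n)) :
    ∀ (d : ℕ) (u0 : EuclideanSpace ℝ (Fin n)), (∀ i, ⟪u0, v i⟫ ≤ 0) → (∃ i, ⟪u0, v i⟫ < 0) →
      coneDim (coneOf' v) ≤ coneDim (coneOf' v ∩ {x | ⟪u0, x⟫ = 0}) + d →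
      ∃ σ, IsFacetOf σ (coneOf' v) ∧ coneOf' v ∩ {x | ⟪u0, x⟫ = 0} ⊆ σ := by
  intro d
  induction d with
  | zero =>
      intro u0 hu0 hne hd
      exfalso
      -- F has dim < dim Ct
      obtain ⟨j, hj⟩ := hne
      set F := coneOf' v ∩ {x | ⟪u0, x⟫ = 0} with hF
      have hspan_lt : span ℝ F < span ℝ (coneOf' v) := by
        refine lt_of_le_of_ne (span_mono Set.inter_subset_left) ?_
        intro heq
        have hvj : v j ∈ span ℝ F := by
          rw [heq, span_coneOf]
          exact subset_span (Set.mem_range_self j)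
        have : ⟪u0, v j⟫ = 0 := by
          refine inner_eq_zero_of_mem_span ?_ _ hvj
          intro y hy; exact hy.2
        linarith
      have := Submodule.finrank_lt_finrank_of_lt hspan_lt
      simp only [coneDim] at hd
      omega
  | succ d ih =>
      intro u0 hu0 hne hd
      set F := coneOf' v ∩ {x | ⟪u0, x⟫ = 0} with hF
      have hFface : IsFaceOf F (coneOf' v) :=
        Or.inr ⟨u0, fun x hx => inner_nonpos_of_coneOf v hu0 hx, rfl⟩
      by_cases hfacet : coneDim F + 1 = coneDim (coneOf' v)
      · exact ⟨F, ⟨hFface, hfacet⟩, le_refl _⟩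
      -- dim F is still too small; rotate the hyperplane
      obtain ⟨j, hj⟩ := hne
      -- span F = span (v '' I)
      have hvI_sub_F : v '' {i | ⟪u0, v i⟫ = 0} ⊆ F := by
        rintro - ⟨i, hi, rfl⟩
        exact ⟨gen_mem_coneOf v i, hi⟩
      have hspanF : span ℝ F = span ℝ (v '' {i | ⟪u0, v i⟫ = 0}) := by
        apply le_antisymm
        · rw [span_le]
          rintro x ⟨hx1, hx2⟩
          exact coneOf_ker_sub_span v hu0 hx1 hx2
        · exact span_mono hvI_sub_F
      have hspan_lt : span ℝ F < span ℝ (coneOf' v) := by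
        refine lt_of_le_of_ne (span_mono Set.inter_subset_left) ?_
        intro heq
        have hvj : v j ∈ span ℝ F := by
          rw [heq, span_coneOf]; exact subset_span (Set.mem_range_self j)
        have : ⟪u0, v j⟫ = 0 :=
          inner_eq_zero_of_mem_span (fun y hy => hy.2) _ hvj
        linarith
      have hdimlt : coneDim F < coneDim (coneOf' v) :=
        Submodule.finrank_lt_finrank_of_lt hspan_lt
      -- set up V, W, w
      set V : Submodule ℝ (EuclideanSpace ℝ (Fin n)) := span ℝ (Set.range v) with hV
      set P : EuclideanSpace ℝ (Fin n) := (orthogonalProjection V u0 : EuclideanSpace ℝ (Fin n))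
        with hP
      set W : Submodule ℝ (EuclideanSpace ℝ (Fin n)) :=
        span ℝ (v '' {i | ⟪u0, v i⟫ = 0}) ⊔ (ℝ ∙ P) with hW
      have hWle : W ≤ V := by
        apply sup_le
        · exact span_mono (by rintro - ⟨i, -, rfl⟩; exact Set.mem_range_self i) |>.trans
            (le_of_eq rfl)
        · rw [Submodule.span_singleton_le_iff_mem]
          exact (orthogonalProjection V u0).2
      have hfrW : finrank ℝ W < finrank ℝ V := by
        have h1 : finrank ℝ W ≤
            finrank ℝ (span ℝ (v '' {i | ⟪u0, v i⟫ = 0})) + finrank ℝ (ℝ ∙ P) := by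
          have h := Submodule.finrank_sup_add_finrank_inf_eq
            (span ℝ (v '' {i | ⟪u0, v i⟫ = 0})) (ℝ ∙ P)
          rw [← hW] at h
          omega
        have h2 : finrank ℝ (ℝ ∙ P) ≤ 1 := by
          by_cases hP0 : P = 0
          · rw [hP0, Submodule.span_zero_singleton]; simp
          · rw [finrank_span_singleton hP0]
        have h3 : finrank ℝ (span ℝ (v '' {i | ⟪u0, v i⟫ = 0})) = coneDim F := by
          rw [coneDim, hspanF]
        have h4 : coneDim (coneOf' v) = finrank ℝ V := by
          rw [coneDim, span_coneOf]
        have h5 : coneDim F + 1 < coneDim (coneOf' v) :=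
          Nat.lt_of_le_of_ne (by omega) hfacet
        omega
      obtain ⟨w, hwmem, hw0⟩ : ∃ w ∈ Wᗮ ⊓ V, w ≠ 0 := by
        have heq := Submodule.finrank_add_inf_finrank_orthogonal hWle
        have hpos : 0 < finrank ℝ (Wᗮ ⊓ V : Submodule ℝ (EuclideanSpace ℝ (Fin n))) := by omega
        have hbot : (Wᗮ ⊓ V : Submodule ℝ (EuclideanSpace ℝ (Fin n))) ≠ ⊥ := by
          intro h; rw [h] at hpos; simp at hpos
        obtain ⟨w, hw, hwne⟩ := Submodule.exists_mem_ne_zero_of_ne_bot hbot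
        exact ⟨w, hw, hwne⟩
      obtain ⟨hwW, hwV⟩ := hwmem
      -- w is orthogonal to u0
      have hwu0 : ⟪u0, w⟫ = 0 := by
        have h1 : ⟪w, u0 - P⟫ = 0 :=
          sub_starProjection_mem_orthogonal (K := V) u0 w hwV
        have hPW : P ∈ W := Submodule.mem_sup_right (Submodule.mem_span_singleton_self P)
        have h2 : ⟪P, w⟫ = 0 := hwW P hPW
        rw [inner_sub_right] at h1
        rw [real_inner_comm] at h2 ⊢
        linarith
      -- w not orthogonal to all generators
      have hwush : ∃ i, ⟪w, v i⟫ ≠ 0 := by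
        by_contra h
        push_neg at h
        apply hw0
        have : ⟪w, w⟫ = 0 := by
          refine inner_eq_zero_of_mem_span ?_ w hwV
          rintro - ⟨i, rfl⟩; exact h i
        exact inner_self_eq_zero.mp this
      -- WLOG some generator has positive inner product with w
      have main : ∀ w' : EuclideanSpace ℝ (Fin n), w' ∈ Wᗮ → w' ∈ V → w' ≠ 0 →
          (∃ i, 0 < ⟪w', v i⟫) → ⟪u0, w'⟫ = 0 →
          ∃ σ, IsFacetOf σ (coneOf' v) ∧ F ⊆ σ := by
        intro w hwW hwV hw0 hpos hwu0
        obtain ⟨i1, hi1⟩ := hpos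
        set S : Finset (Fin k) := Finset.filter (fun i => 0 < ⟪w, v i⟫) Finset.univ with hS
        have hSne : S.Nonempty := ⟨i1, Finset.mem_filter.mpr ⟨Finset.mem_univ _, hi1⟩⟩
        -- generators in S are not in I
        have hSnotI : ∀ i ∈ S, ⟪u0, v i⟫ < 0 := by
          intro i hiS
          have hwi : 0 < ⟪w, v i⟫ := (Finset.mem_filter.mp hiS).2
          rcases lt_or_eq_of_le (hu0 i) with h | h
          · exact h
          · exfalso
            have : v i ∈ W := Submodule.mem_sup_left (subset_span ⟨i, h, rfl⟩)
            have := hwW (v i) this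
            rw [real_inner_comm] at this
            linarith
        set t : ℝ := S.inf' hSne (fun i => -⟪u0, v i⟫ / ⟪w, v i⟫) with ht
        have htpos : 0 < t := by
          rw [ht, Finset.lt_inf'_iff]
          intro i hiS
          have h1 := hSnotI i hiS
          have h2 : 0 < ⟪w, v i⟫ := (Finset.mem_filter.mp hiS).2
          exact div_pos (by linarith) h2
        set u' : EuclideanSpace ℝ (Fin n) := u0 + t • w with hu'
        have hu'v : ∀ i, ⟪u', v i⟫ ≤ 0 := by
          intro i
          rw [hu', inner_add_left, real_inner_smul_left]
          by_cases hiS : i ∈ S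
          · have hwi : 0 < ⟪w, v i⟫ := (Finset.mem_filter.mp hiS).2
            have hle : t ≤ -⟪u0, v i⟫ / ⟪w, v i⟫ := Finset.inf'_le _ hiS
            have := (le_div_iff₀ hwi).mp hle
            linarith
          · have hwi : ⟪w, v i⟫ ≤ 0 := by
              by_contra h; push_neg at h
              exact hiS (Finset.mem_filter.mpr ⟨Finset.mem_univ _, h⟩)
            have := mul_nonpos_of_nonneg_of_nonpos htpos.le hwi
            linarith [hu0 i]
        have hne' : ∃ i, ⟪u', v i⟫ < 0 := by
          by_contra h
          push_neg at h
          have hall : ∀ i, ⟪u', v i⟫ = 0 := fun i => le_antisymm (hu'v i) (h i)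
          have : ⟪u', w⟫ = 0 := by
            refine inner_eq_zero_of_mem_span ?_ w hwV
            rintro - ⟨i, rfl⟩; exact hall i
          rw [hu', inner_add_left, real_inner_smul_left, hwu0] at this
          have : ⟪w, w⟫ = 0 := by
            have h' : t * ⟪w, w⟫ = 0 := by linarith
            rcases mul_eq_zero.mp h' with h'' | h''
            · linarith
            · exact h''
          exact hw0 (inner_self_eq_zero.mp this)
        -- F ⊆ F'
        have hFsub : F ⊆ coneOf' v ∩ {x | ⟪u', x⟫ = 0} := by
          rintro x ⟨hx1, hx2⟩
          refine ⟨hx1, ?_⟩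
          have hxspan : x ∈ span ℝ (v '' {i | ⟪u0, v i⟫ = 0}) :=
            coneOf_ker_sub_span v hu0 hx1 hx2
          have hwx : ⟪w, x⟫ = 0 := by
            have : x ∈ W := Submodule.mem_sup_left hxspan
            have := hwW x this
            rw [real_inner_comm] at this; exact this
          show ⟪u', x⟫ = 0
          rw [hu', inner_add_left, real_inner_smul_left, hwx, hx2]
          ring
        -- dim increases
        obtain ⟨i0, hi0S, hi0⟩ := S.exists_mem_eq_inf' hSne (fun i => -⟪u0, v i⟫ / ⟪w, v i⟫)
        have hwi0 : 0 < ⟪w, v i0⟫ := (Finset.mem_filter.mp hi0S).2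
        have hvi0F' : v i0 ∈ coneOf' v ∩ {x | ⟪u', x⟫ = 0} := by
          refine ⟨gen_mem_coneOf v i0, ?_⟩
          show ⟪u', v i0⟫ = 0
          rw [hu', inner_add_left, real_inner_smul_left]
          rw [← ht] at hi0
          have hne0 := hwi0.ne'
          rw [hi0, div_mul_cancel₀ _ hne0]
          ring
        have hvi0notF : v i0 ∉ span ℝ F := by
          rw [hspanF]
          intro hmem
          have : v i0 ∈ W := Submodule.mem_sup_left hmem
          have := hwW (v i0) this
          rw [real_inner_comm] at this
          linarith
        have hdim' : coneDim F < coneDim (coneOf' v ∩ {x | ⟪u', x⟫ = 0}) := by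
          apply Submodule.finrank_lt_finrank_of_lt
          refine lt_of_le_of_ne (span_mono hFsub) ?_
          intro heq
          exact hvi0notF (heq ▸ subset_span hvi0F')
        have hd' : coneDim (coneOf' v) ≤ coneDim (coneOf' v ∩ {x | ⟪u', x⟫ = 0}) + d := by
          omega
        obtain ⟨σ, hσ1, hσ2⟩ := ih u' hu'v hne' hd'
        exact ⟨σ, hσ1, hFsub.trans hσ2⟩
      rcases hwush with ⟨i2, hi2⟩
      rcases lt_or_gt_of_ne hi2 with hneg | hpos
      · exact main (-w) (Submodule.neg_mem _ hwW) (Submodule.neg_mem _ hwV)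
          (neg_ne_zero.mpr hw0) ⟨i2, by rw [inner_neg_left]; linarith⟩
          (by rw [inner_neg_right, hwu0, neg_zero])
      · exact main w hwW hwV hw0 ⟨i2, hpos⟩ hwu0

theorem proj_inner (V : Submodule ℝ (EuclideanSpace ℝ (Fin n))) (a z : EuclideanSpace ℝ (Fin n))
    (hz : z ∈ V) : ⟪(orthogonalProjection V a : EuclideanSpace ℝ (Fin n)), z⟫ = ⟪a, z⟫ := by
  have h1 : ⟪z, a - (orthogonalProjection V a : EuclideanSpace ℝ (Fin n))⟫ = 0 :=
    sub_starProjection_mem_orthogonal (K := V) a z hz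
  rw [inner_sub_right] at h1
  rw [real_inner_comm, ← sub_eq_zero]
  rw [real_inner_comm a z] at h1
  linarith

/-- the main membership criterion: a point of the span satisfying all facet
inequalities belongs to the cone. -/
theorem mem_coneOf_of_facets (v : Fin k → EuclideanSpace ℝ (Fin n))
    (u : Set (EuclideanSpace ℝ (Fin n)) → EuclideanSpace ℝ (Fin n))
    (hu_half : ∀ σ, IsFacetOf σ (coneOf' v) → ∀ x ∈ coneOf' v, ⟪u σ, x⟫ ≤ 0)
    (hu_face : ∀ σ, IsFacetOf σ (coneOf' v) → {x | ⟪u σ, x⟫ = 0} ∩ coneOf' v = σ)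
    {x : EuclideanSpace ℝ (Fin n)} (hx_span : x ∈ span ℝ (coneOf' v))
    (hx : ∀ σ, IsFacetOf σ (coneOf' v) → ⟪u σ, x⟫ ≤ 0) :
    x ∈ coneOf' v := by
  by_contra hxC
  set V : Submodule ℝ (EuclideanSpace ℝ (Fin n)) := span ℝ (Set.range v) with hV
  have hxV : x ∈ V := by rw [hV, ← span_coneOf]; exact hx_span
  set y : EuclideanSpace ℝ (Fin n) := ∑ i, v i with hy
  have hyC : y ∈ coneOf' v := ⟨fun _ => 1, fun _ => zero_le_one, by simp [hy]⟩
  have hyV : y ∈ V := coneOf_subset_span v hyC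
  -- y sees every functional: if a functional nonpositive on the cone kills y, it kills the cone
  have hy_int : ∀ a : EuclideanSpace ℝ (Fin n), (∀ i, ⟪a, v i⟫ ≤ 0) → ⟪a, y⟫ = 0 →
      ∀ i, ⟪a, v i⟫ = 0 := by
    intro a ha hay i
    have hrep : ⟪a, ∑ j, (1:ℝ) • v j⟫ = 0 := by
      simpa [hy] using hay
    have := coneOf_ker_rep v ha (fun _ => zero_le_one) hrep i
    simpa using this
  -- the segment
  set p : ℝ → EuclideanSpace ℝ (Fin n) := fun t => y + t • (x - y) with hp
  have hp_cont : Continuous p := by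
    apply Continuous.add continuous_const
    exact Continuous.smul continuous_id continuous_const
  have hpV : ∀ t, p t ∈ V := fun t =>
    V.add_mem hyV (V.smul_mem t (V.sub_mem hxV hyV))
  set A : Set ℝ := Set.Icc (0:ℝ) 1 ∩ p ⁻¹' (coneOf' v) with hA
  have hAclosed : IsClosed A :=
    isClosed_Icc.inter ((isClosed_coneOf v).preimage hp_cont)
  have hA0 : (0:ℝ) ∈ A := by
    constructor
    · exact Set.mem_Icc.mpr ⟨le_refl _, zero_le_one⟩
    · show p 0 ∈ coneOf' v
      simpa [hp] using hyC
  have hAbdd : BddAbove A := ⟨1, fun t ht => ht.1.2⟩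
  set ts : ℝ := sSup A with hts
  have htsA : ts ∈ A := hAclosed.csSup_mem ⟨0, hA0⟩ hAbdd
  have hts0 : 0 ≤ ts := le_csSup hAbdd hA0
  have hts1 : ts ≤ 1 := htsA.1.2
  set z : EuclideanSpace ℝ (Fin n) := p ts with hz
  have hzC : z ∈ coneOf' v := htsA.2
  have hts1' : ts < 1 := by
    rcases lt_or_eq_of_le hts1 with h | h
    · exact h
    · exfalso
      apply hxC
      have : p 1 = x := by simp [hp]
      rw [← this, ← h]
      exact hzC
  -- points beyond ts are outside the cone
  have houtside : ∀ t : ℝ, ts < t → t ≤ 1 → p t ∉ coneOf' v := by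
    intro t h1 h2 hmem
    have : t ∈ A := ⟨Set.mem_Icc.mpr ⟨le_trans hts0 h1.le, h2⟩, hmem⟩
    exact absurd (le_csSup hAbdd this) (not_le.mpr h1)
  -- the sequence of times
  set tseq : ℕ → ℝ := fun m => ts + (1 - ts) / (m + 1) with htseq
  have htseq_gt : ∀ m, ts < tseq m := by
    intro m
    have : 0 < (1 - ts) / (m + 1 : ℝ) :=
      div_pos (by linarith) (by positivity)
    simp only [htseq]; linarith
  have htseq_le : ∀ m, tseq m ≤ 1 := by
    intro m
    have h1 : (1 - ts) / (m + 1 : ℝ) ≤ (1 - ts) / 1 := by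
      apply div_le_div_of_nonneg_left (by linarith) one_pos
      have : (0:ℝ) ≤ m := Nat.cast_nonneg m
      linarith
    simp only [htseq]
    rw [div_one] at h1
    linarith
  have htseq_tendsto : Filter.Tendsto tseq Filter.atTop (nhds ts) := by
    have h1 : Filter.Tendsto (fun m : ℕ => (1 - ts) / (m + 1)) Filter.atTop (nhds 0) := by
      have := tendsto_one_div_add_atTop_nhds_zero_nat (𝕜 := ℝ)
      have h2 := this.const_mul (1 - ts)
      simpa [div_eq_mul_inv, mul_comm] using h2
    have := h1.const_add ts
    simpa [htseq] using this
  -- separating functionals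
  have hsep : ∀ m : ℕ, ∃ e : EuclideanSpace ℝ (Fin n), ‖e‖ = 1 ∧ e ∈ V ∧
      (∀ y' ∈ coneOf' v, ⟪e, y'⟫ ≤ 0) ∧ 0 < ⟪e, p (tseq m)⟫ := by
    intro m
    obtain ⟨w, hw1, hw2⟩ := coneOf_sep v (isClosed_coneOf v)
      (houtside (tseq m) (htseq_gt m) (htseq_le m))
    set q : EuclideanSpace ℝ (Fin n) := (orthogonalProjection V w : EuclideanSpace ℝ (Fin n))
      with hq
    have hqinner : ∀ z' ∈ V, ⟪q, z'⟫ = ⟪w, z'⟫ := fun z' hz' => proj_inner V w z' hz'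
    have hq2 : 0 < ⟪q, p (tseq m)⟫ := by rw [hqinner _ (hpV _)]; exact hw2
    have hq0 : q ≠ 0 := by
      intro h; rw [h] at hq2; simp at hq2
    refine ⟨‖q‖⁻¹ • q, norm_smul_inv_norm hq0, V.smul_mem _ (orthogonalProjection V w).2, ?_, ?_⟩
    · intro y' hy'
      rw [real_inner_smul_left]
      have h1 : ⟪q, y'⟫ ≤ 0 := by
        rw [hqinner _ (coneOf_subset_span v hy')]
        exact hw1 y' hy'
      exact mul_nonpos_of_nonneg_of_nonpos (by positivity) h1
    · rw [real_inner_smul_left]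
      have : 0 < ‖q‖⁻¹ := by
        rw [inv_pos]; exact norm_pos_iff.mpr hq0
      exact mul_pos this hq2
  choose e he_norm he_V he_nonpos he_pos using hsep
  -- extract a convergent subsequence
  have hsphere : IsCompact (Metric.sphere (0 : EuclideanSpace ℝ (Fin n)) 1) :=
    isCompact_sphere _ _
  have he_mem : ∀ m, e m ∈ Metric.sphere (0 : EuclideanSpace ℝ (Fin n)) 1 := fun m =>
    mem_sphere_zero_iff_norm.mpr (he_norm m)
  obtain ⟨eL, heLs, φ, hφmono, hφtendsto⟩ := hsphere.tendsto_subseq he_mem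
  have heLV : eL ∈ V := by
    have hVclosed : IsClosed (V : Set (EuclideanSpace ℝ (Fin n))) :=
      Submodule.closed_of_finiteDimensional V
    exact hVclosed.mem_of_tendsto hφtendsto
      (Filter.Eventually.of_forall fun m => he_V (φ m))
  have heLnonpos : ∀ y' ∈ coneOf' v, ⟪eL, y'⟫ ≤ 0 := by
    intro y' hy'
    have hlim : Filter.Tendsto (fun m => ⟪e (φ m), y'⟫) Filter.atTop (nhds ⟪eL, y'⟫) :=
      hφtendsto.inner tendsto_const_nhds
    exact le_of_tendsto hlim (Filter.Eventually.of_forall fun m => he_nonpos (φ m) y' hy')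
  have heLz : 0 ≤ ⟪eL, z⟫ := by
    have hplim : Filter.Tendsto (fun m => p (tseq (φ m))) Filter.atTop (nhds z) := by
      have h1 : Filter.Tendsto (fun m => tseq (φ m)) Filter.atTop (nhds ts) :=
        htseq_tendsto.comp hφmono.tendsto_atTop
      exact (hp_cont.tendsto ts).comp h1
    have hlim : Filter.Tendsto (fun m => ⟪e (φ m), p (tseq (φ m))⟫) Filter.atTop
        (nhds ⟪eL, z⟫) := hφtendsto.inner hplim
    exact ge_of_tendsto hlim (Filter.Eventually.of_forall fun m => (he_pos (φ m)).le)
  have heLz0 : ⟪eL, z⟫ = 0 := le_antisymm (heLnonpos z hzC) heLz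
  -- eL supports a proper face containing z
  have heLgen : ∀ i, ⟪eL, v i⟫ ≤ 0 := fun i => heLnonpos (v i) (gen_mem_coneOf v i)
  have heLne : ∃ i, ⟪eL, v i⟫ < 0 := by
    by_contra h
    push_neg at h
    have hall : ∀ i, ⟪eL, v i⟫ = 0 := fun i => le_antisymm (heLgen i) (h i)
    have : ⟪eL, eL⟫ = 0 := by
      refine inner_eq_zero_of_mem_span ?_ eL heLV
      rintro - ⟨i, rfl⟩; exact hall i
    have : eL = 0 := inner_self_eq_zero.mp this
    rw [this] at heLs
    simp at heLs
  -- find the facet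
  obtain ⟨σ, hσfacet, hσsub⟩ := exists_facet_above v (coneDim (coneOf' v)) eL heLgen heLne
    (by omega)
  have hzσ : z ∈ σ := hσsub ⟨hzC, heLz0⟩
  have hσeq := hu_face σ hσfacet
  have huz : ⟪u σ, z⟫ = 0 := by
    rw [← hσeq] at hzσ
    exact hzσ.1
  have hugen : ∀ i, ⟪u σ, v i⟫ ≤ 0 := fun i =>
    hu_half σ hσfacet (v i) (gen_mem_coneOf v i)
  have huy : ⟪u σ, y⟫ < 0 := by
    rcases lt_or_eq_of_le (hu_half σ hσfacet y hyC) with h | h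
    · exact h
    · exfalso
      have hall : ∀ i, ⟪u σ, v i⟫ = 0 := hy_int (u σ) hugen h
      have hCsub : coneOf' v ⊆ {x' | ⟪u σ, x'⟫ = 0} := by
        intro x' hx'
        refine inner_eq_zero_of_mem_span ?_ x' (coneOf_subset_span v hx')
        rintro y' ⟨i, rfl⟩
        exact hall i
      have hσC : σ = coneOf' v := by
        rw [← hσeq]
        exact Set.inter_eq_self_of_subset_right hCsub |>.symm ▸
          (Set.inter_eq_right.mpr hCsub)
      have := hσfacet.2
      rw [hσC] at this
      omega
  have hux : ⟪u σ, x⟫ ≤ 0 := hx σ hσfacet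
  -- contradiction from the inner product computation at z
  have hexpand : ⟪u σ, z⟫ = ⟪u σ, y⟫ + ts * (⟪u σ, x⟫ - ⟪u σ, y⟫) := by
    rw [hz, hp]
    rw [inner_add_right, real_inner_smul_right, inner_sub_right]
  rw [huz] at hexpand
  nlinarith [mul_nonneg hts0 (neg_nonneg.mpr hux),
    mul_pos (show (0:ℝ) < 1 - ts by linarith) (neg_pos.mpr huy)]

end FaceAux

/-- A proper face `C` of a cone `C̃` is the intersection of the
half-spaces of the facets of `C̃` not containing `C`, intersected with `S(C)`. -/
theorem face_eq_inter_facet_halfspaces_inter_span {n : ℕ}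
    (Ct C : Set (EuclideanSpace ℝ (Fin n))) (hCt : IsPolyhedralCone Ct)
    (hface : IsFaceOf C Ct) (hproper : C ≠ Ct)
    (u : Set (EuclideanSpace ℝ (Fin n)) → EuclideanSpace ℝ (Fin n))
    (hu_half : ∀ σ, IsFacetOf σ Ct → ∀ x ∈ Ct, ⟪u σ, x⟫ ≤ 0)
    (hu_face : ∀ σ, IsFacetOf σ Ct → {x | ⟪u σ, x⟫ = 0} ∩ Ct = σ) :
    C = (⋂ σ ∈ {σ | IsFacetOf σ Ct ∧ ¬ C ⊆ σ}, {x | ⟪u σ, x⟫ ≤ 0}) ∩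
        (Submodule.span ℝ C : Set (EuclideanSpace ℝ (Fin n))) := by
  obtain ⟨k, v, hCtv⟩ := hCt
  subst hCtv
  have hCt_cone : {x | ∃ lam : Fin k → ℝ, (∀ i, 0 ≤ lam i) ∧ x = ∑ i, lam i • v i}
      = coneOf' v := rfl
  rw [hCt_cone] at *
  rcases hface with h | ⟨u0, hu0, hCeq⟩
  · exact absurd h hproper
  have hCsubCt : C ⊆ coneOf' v := by rw [hCeq]; exact Set.inter_subset_left
  have hCker : ∀ y ∈ C, ⟪u0, y⟫ = 0 := by
    intro y hy; rw [hCeq] at hy; exact hy.2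
  ext x
  constructor
  · intro hxC
    refine ⟨?_, Submodule.subset_span hxC⟩
    apply Set.mem_iInter₂.mpr
    rintro σ ⟨hσ, -⟩
    exact hu_half σ hσ x (hCsubCt hxC)
  · rintro ⟨hx1, hx2⟩
    have hx2' : x ∈ Submodule.span ℝ C := hx2
    have hfacets : ∀ σ, IsFacetOf σ (coneOf' v) → ⟪u σ, x⟫ ≤ 0 := by
      intro σ hσ
      by_cases hsub : C ⊆ σ
      · have hσker : ∀ y ∈ σ, ⟪u σ, y⟫ = 0 := by
          intro y hy
          rw [← hu_face σ hσ] at hy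
          exact hy.1
        have : ⟪u σ, x⟫ = 0 :=
          inner_eq_zero_of_mem_span (fun y hy => hσker y (hsub hy)) x hx2'
        exact le_of_eq this
      · exact Set.mem_iInter₂.mp hx1 σ ⟨hσ, hsub⟩
    have hxspanCt : x ∈ Submodule.span ℝ (coneOf' v) :=
      Submodule.span_mono hCsubCt hx2'
    have hxCt : x ∈ coneOf' v :=
      mem_coneOf_of_facets v u hu_half hu_face hxspanCt hfacets
    have hxker : ⟪u0, x⟫ = 0 :=
      inner_eq_zero_of_mem_span hCker x hx2'
    rw [hCeq]
    exact ⟨hxCt, hxker⟩
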